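/- (Localized Hardy inequality near the origin) Let R > 0 and let c > 0 satisfy 2c < R. Then there exists a constant C > 0, independent of u, such that for every weakly differentiable u : (0,R) → ℝ with ∫₀^{2c} r⁴ u'(r)² dr < ∞ and ∫_c^{2c} r⁴ u(r)² dr < ∞, one has ∫₀^c r² u(r)² dr ≤ C ( ∫₀^{2c} r⁴ u'(r)² dr + ∫_c^{2c} r⁴ u(r)² dr ). -/

import Mathlib

open MeasureTheory Real Filter Set
open scoped ENNReal NNReal


lemma lintegral_CS (μ : Measure ℝ) (f g : ℝ → ℝ≥0∞) (hf : AEMeasurable f μ) (hg : AEMeasurable g μ) :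
    (∫⁻ x, f x * g x ∂μ) ^ 2 ≤ (∫⁻ x, f x ^ 2 ∂μ) * (∫⁻ x, g x ^ 2 ∂μ) := by
  have hpq : Real.HolderConjugate 2 2 := Real.HolderConjugate.two_two
  have h := ENNReal.lintegral_mul_le_Lp_mul_Lq μ hpq hf hg
  have h2 : ∀ x : ℝ≥0∞, x ^ (2:ℝ) = x ^ 2 := fun x => by
    rw [show (2:ℝ) = ((2:ℕ):ℝ) by norm_num, ENNReal.rpow_natCast]
  have sq : ∀ x : ℝ≥0∞, (x ^ (1/2:ℝ)) ^ 2 = x := fun x => by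
    rw [← ENNReal.rpow_natCast (x ^ (1/2:ℝ)) 2, ← ENNReal.rpow_mul]
    norm_num
  calc (∫⁻ x, f x * g x ∂μ) ^ 2
      ≤ ((∫⁻ x, f x ^ (2:ℝ) ∂μ) ^ (1/2:ℝ) * (∫⁻ x, g x ^ (2:ℝ) ∂μ) ^ (1/2:ℝ)) ^ 2 := by
        gcongr
        simpa using h
    _ = (∫⁻ x, f x ^ 2 ∂μ) * (∫⁻ x, g x ^ 2 ∂μ) := by
        rw [mul_pow, sq, sq]
        simp only [h2]

lemma hardy_key (R c s : ℝ) (hc : 0 < c) (h2c : 2 * c < R) (u v : ℝ → ℝ) (hv : Measurable v)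
    (hderiv : ∀ r ∈ Set.Ioo (0:ℝ) R, HasDerivAt u (v r) r)
    (hA : IntegrableOn (fun r => r ^ 4 * (v r) ^ 2) (Set.Ioo 0 (2*c)))
    (hs : s ∈ Set.Ioo c (2*c)) (r : ℝ) (hr : r ∈ Set.Ioo 0 c) :
    ENNReal.ofReal (r ^ 2 * u r ^ 2) ≤ ENNReal.ofReal (2 * c ^ 2 * u s ^ 2)
      + ENNReal.ofReal ((4/5:ℝ) * r ^ (-(1/2):ℝ)) *
        ∫⁻ t in Set.Ioc r s, ENNReal.ofReal (t ^ (7/2:ℝ) * v t ^ 2) := by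
  have hr0 : 0 < r := hr.1
  have hrs : r < s := lt_trans hr.2 hs.1
  have hs0 : 0 < s := lt_trans hc hs.1
  have hsub : Set.Ioc r s ⊆ Set.Ioo 0 (2*c) :=
    fun t ht => ⟨lt_trans hr0 ht.1, lt_of_le_of_lt ht.2 hs.2⟩
  have hsubR : Set.Icc r s ⊆ Set.Ioo 0 R :=
    fun t ht => ⟨lt_of_lt_of_le hr0 ht.1, by linarith [ht.2, hs.2]⟩
  have hIcc : Set.uIcc r s = Set.Icc r s := uIcc_of_le hrs.le
  have h0notin : (0:ℝ) ∉ Set.uIcc r s := by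
    rw [hIcc]; exact fun h => absurd h.1 (not_le.2 hr0)
  -- v is integrable on Ioc r s
  have hvint : IntegrableOn v (Set.Ioc r s) := by
    have hb : IntegrableOn (fun t => 1 + r⁻¹ ^ 4 * (t ^ 4 * v t ^ 2)) (Set.Ioc r s) :=
      (integrableOn_const measure_Ioc_lt_top.ne).add ((hA.mono_set hsub).const_mul _)
    refine Integrable.mono' hb hv.aestronglyMeasurable.restrict ?_
    filter_upwards [ae_restrict_mem measurableSet_Ioc] with t ht
    have h0 : (1:ℝ) ≤ r⁻¹ * t := by
      rw [inv_mul_eq_div, le_div_iff₀ hr0]; linarith [ht.1]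
    have h1 : (1:ℝ) ≤ r⁻¹ ^ 4 * t ^ 4 := by
      calc (1:ℝ) = 1 ^ 4 := by norm_num
        _ ≤ (r⁻¹ * t) ^ 4 := pow_le_pow_left₀ (by norm_num) h0 4
        _ = r⁻¹ ^ 4 * t ^ 4 := mul_pow _ _ _
    rw [Real.norm_eq_abs]
    have h2 : (1:ℝ) * v t ^ 2 ≤ (r⁻¹ ^ 4 * t ^ 4) * v t ^ 2 :=
      mul_le_mul_of_nonneg_right h1 (sq_nonneg _)
    nlinarith [sq_abs (v t), sq_nonneg (|v t| - 1)]
  -- FTC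
  have hvii : IntervalIntegrable v volume r s :=
    (intervalIntegrable_iff_integrableOn_Ioc_of_le hrs.le).2 hvint
  have ftc : ∫ t in r..s, v t = u s - u r :=
    intervalIntegral.integral_eq_sub_of_hasDerivAt (fun x hx => hderiv x (hsubR (hIcc ▸ hx))) hvii
  set J : ℝ := ∫ t in Set.Ioc r s, |v t| with hJdef
  have hJ0 : 0 ≤ J := setIntegral_nonneg measurableSet_Ioc (fun t _ => abs_nonneg _)
  have habs : |u s - u r| ≤ J := by
    rw [← ftc]
    calc |∫ t in r..s, v t| ≤ ∫ t in r..s, |v t| :=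
          intervalIntegral.abs_integral_le_integral_abs hrs.le
      _ = J := by rw [intervalIntegral.integral_of_le hrs.le]
  have hur2 : u r ^ 2 ≤ 2 * u s ^ 2 + 2 * J ^ 2 := by
    have h := mul_self_le_mul_self (abs_nonneg (u s - u r)) habs
    nlinarith [sq_abs (u s - u r), sq_nonneg (2 * u s - u r)]
  -- the L² quantities
  set L : ℝ≥0∞ := ∫⁻ t in Set.Ioc r s, ENNReal.ofReal |v t| with hLdef
  have hJL : ENNReal.ofReal J = L :=
    ofReal_integral_eq_lintegral_ofReal hvint.abs
      (by filter_upwards with t using abs_nonneg _)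
  -- Cauchy–Schwarz
  have hfg : ∀ᵐ t ∂(volume.restrict (Set.Ioc r s)),
      ENNReal.ofReal |v t|
        = ENNReal.ofReal (t ^ (-(7/4):ℝ)) * ENNReal.ofReal (t ^ ((7/4):ℝ) * |v t|) := by
    filter_upwards [ae_restrict_mem measurableSet_Ioc] with t ht
    have ht0 : 0 < t := lt_trans hr0 ht.1
    rw [← ENNReal.ofReal_mul (Real.rpow_nonneg ht0.le _), ← mul_assoc, ← Real.rpow_add ht0]
    norm_num
  have hCS : L ^ 2 ≤ (∫⁻ t in Set.Ioc r s, ENNReal.ofReal (t ^ (-(7/4):ℝ)) ^ 2)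
      * (∫⁻ t in Set.Ioc r s, ENNReal.ofReal (t ^ ((7/4):ℝ) * |v t|) ^ 2) := by
    have hmf : AEMeasurable (fun t : ℝ => ENNReal.ofReal (t ^ (-(7/4):ℝ)))
        (volume.restrict (Set.Ioc r s)) := by fun_prop
    have hmg : AEMeasurable (fun t : ℝ => ENNReal.ofReal (t ^ ((7/4):ℝ) * |v t|))
        (volume.restrict (Set.Ioc r s)) := by fun_prop
    calc L ^ 2 = (∫⁻ t in Set.Ioc r s,
          ENNReal.ofReal (t ^ (-(7/4):ℝ)) * ENNReal.ofReal (t ^ ((7/4):ℝ) * |v t|)) ^ 2 := by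
          rw [hLdef, lintegral_congr_ae hfg]
      _ ≤ _ := lintegral_CS _ _ _ hmf hmg
  -- simplify the two factors
  have hfsq : (∫⁻ t in Set.Ioc r s, ENNReal.ofReal (t ^ (-(7/4):ℝ)) ^ 2)
      = ∫⁻ t in Set.Ioc r s, ENNReal.ofReal (t ^ (-(7/2):ℝ)) := by
    apply lintegral_congr_ae
    filter_upwards [ae_restrict_mem measurableSet_Ioc] with t ht
    have ht0 : 0 < t := lt_trans hr0 ht.1
    rw [← ENNReal.ofReal_pow (Real.rpow_nonneg ht0.le _),
      ← Real.rpow_natCast (t ^ (-(7/4):ℝ)) 2, ← Real.rpow_mul ht0.le]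
    norm_num
  have hgsq : (∫⁻ t in Set.Ioc r s, ENNReal.ofReal (t ^ ((7/4):ℝ) * |v t|) ^ 2)
      = ∫⁻ t in Set.Ioc r s, ENNReal.ofReal (t ^ (7/2:ℝ) * v t ^ 2) := by
    apply lintegral_congr_ae
    filter_upwards [ae_restrict_mem measurableSet_Ioc] with t ht
    have ht0 : 0 < t := lt_trans hr0 ht.1
    rw [← ENNReal.ofReal_pow (by positivity), mul_pow, sq_abs,
      ← Real.rpow_natCast (t ^ ((7/4):ℝ)) 2, ← Real.rpow_mul ht0.le]
    norm_num
  -- value of the first factor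
  have hif : IntegrableOn (fun t => t ^ (-(7/2):ℝ)) (Set.Ioc r s) :=
    (intervalIntegrable_iff_integrableOn_Ioc_of_le hrs.le).1
      (intervalIntegral.intervalIntegrable_rpow (Or.inr h0notin))
  have hval : (∫ t in Set.Ioc r s, t ^ (-(7/2):ℝ)) ≤ (2/5) * r ^ (-(5/2):ℝ) := by
    rw [← intervalIntegral.integral_of_le hrs.le,
      integral_rpow (Or.inr ⟨by norm_num, h0notin⟩)]
    have he : (-(7/2):ℝ) + 1 = -(5/2) := by norm_num
    rw [he]
    have h1 : (0:ℝ) ≤ s ^ (-(5/2):ℝ) := Real.rpow_nonneg hs0.le _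
    have h2 : (0:ℝ) ≤ r ^ (-(5/2):ℝ) := Real.rpow_nonneg hr0.le _
    linarith
  have hF1 : (∫⁻ t in Set.Ioc r s, ENNReal.ofReal (t ^ (-(7/2):ℝ)))
      ≤ ENNReal.ofReal ((2/5) * r ^ (-(5/2):ℝ)) := by
    rw [← ofReal_integral_eq_lintegral_ofReal hif (by
      filter_upwards [ae_restrict_mem measurableSet_Ioc] with t ht
      exact Real.rpow_nonneg (lt_trans hr0 ht.1).le _)]
    exact ENNReal.ofReal_le_ofReal hval
  -- assemble
  set H : ℝ≥0∞ := ∫⁻ t in Set.Ioc r s, ENNReal.ofReal (t ^ (7/2:ℝ) * v t ^ 2) with hHdef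
  have hL2 : L ^ 2 ≤ ENNReal.ofReal ((2/5) * r ^ (-(5/2):ℝ)) * H := by
    calc L ^ 2 ≤ _ := hCS
      _ = (∫⁻ t in Set.Ioc r s, ENNReal.ofReal (t ^ (-(7/2):ℝ))) * H := by rw [hfsq, hgsq]
      _ ≤ _ := mul_le_mul_left hF1 H
  calc ENNReal.ofReal (r ^ 2 * u r ^ 2)
      ≤ ENNReal.ofReal (2 * r ^ 2 * u s ^ 2 + 2 * r ^ 2 * J ^ 2) := by
        apply ENNReal.ofReal_le_ofReal; nlinarith [sq_nonneg r, hur2]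
    _ = ENNReal.ofReal (2 * r ^ 2 * u s ^ 2) + ENNReal.ofReal (2 * r ^ 2) * ENNReal.ofReal (J ^ 2) := by
        rw [← ENNReal.ofReal_mul (by positivity), ENNReal.ofReal_add (by positivity) (by positivity)]
    _ ≤ ENNReal.ofReal (2 * c ^ 2 * u s ^ 2) + ENNReal.ofReal (2 * r ^ 2) * (L ^ 2) := by
        apply add_le_add
        · apply ENNReal.ofReal_le_ofReal
          have : r ^ 2 ≤ c ^ 2 := by nlinarith [hr.1, hr.2]
          nlinarith [sq_nonneg (u s)]
        · apply mul_le_mul_right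
          rw [ENNReal.ofReal_pow hJ0, hJL]
    _ ≤ ENNReal.ofReal (2 * c ^ 2 * u s ^ 2)
        + ENNReal.ofReal (2 * r ^ 2) * (ENNReal.ofReal ((2/5) * r ^ (-(5/2):ℝ)) * H) := by
        exact add_le_add_right (mul_le_mul_right hL2 _) _
    _ = ENNReal.ofReal (2 * c ^ 2 * u s ^ 2) + ENNReal.ofReal ((4/5:ℝ) * r ^ (-(1/2):ℝ)) * H := by
        rw [← mul_assoc, ← ENNReal.ofReal_mul (by positivity)]
        congr 2
        rw [show (r:ℝ) ^ 2 = r ^ (2:ℝ) by rw [← Real.rpow_natCast r 2]; norm_num]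
        rw [show (2:ℝ) * r ^ (2:ℝ) * ((2/5) * r ^ (-(5/2):ℝ)) = (4/5) * (r ^ (2:ℝ) * r ^ (-(5/2):ℝ)) by ring,
          ← Real.rpow_add hr0]
        norm_num

lemma hardy_tonelli (R c s : ℝ) (hc : 0 < c) (h2c : 2 * c < R) (v : ℝ → ℝ) (hv : Measurable v)
    (hA : IntegrableOn (fun r => r ^ 4 * (v r) ^ 2) (Set.Ioo 0 (2*c)))
    (hs : s ∈ Set.Ioo c (2*c))
    (A : ℝ) (hAdef : A = ∫ r in Set.Ioo (0:ℝ) (2*c), r ^ 4 * (v r) ^ 2) :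
    (∫⁻ r in Set.Ioo (0:ℝ) c,
      ENNReal.ofReal ((4/5:ℝ) * r ^ (-(1/2):ℝ)) *
        ∫⁻ t in Set.Ioc r s, ENNReal.ofReal (t ^ (7/2:ℝ) * v t ^ 2))
      ≤ ENNReal.ofReal ((8/5) * A) := by
  have hs0 : 0 < s := lt_trans hc hs.1
  set G7 : ℝ → ℝ≥0∞ := fun t => ENNReal.ofReal (t ^ (7/2:ℝ) * v t ^ 2) with hG7def
  have hG7m : Measurable G7 := by fun_prop
  -- the 2-variable function
  set F : ℝ → ℝ → ℝ≥0∞ := fun r t =>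
    ENNReal.ofReal (r ^ (-(1/2):ℝ)) * (Set.Ioi r).indicator G7 t with hFdef
  have hFm : Measurable (Function.uncurry F) := by
    apply Measurable.mul
    · have : Measurable (fun p : ℝ × ℝ => ENNReal.ofReal (p.1 ^ (-(1/2):ℝ))) := by fun_prop
      exact this
    · have heq : (fun p : ℝ × ℝ => (Set.Ioi p.1).indicator G7 p.2)
          = {q : ℝ × ℝ | q.1 < q.2}.indicator (fun q => G7 q.2) := by
        ext p
        by_cases h : p.1 < p.2
        · rw [Set.indicator_of_mem (by exact h), Set.indicator_of_mem (by exact h)]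
        · rw [Set.indicator_of_notMem (by exact h), Set.indicator_of_notMem (by exact h)]
      show Measurable (fun p : ℝ × ℝ => (Set.Ioi p.1).indicator G7 p.2)
      rw [heq]
      exact (hG7m.comp measurable_snd).indicator (measurableSet_lt measurable_fst measurable_snd)
  -- rewrite inner integral via indicator
  have hinner : ∀ r : ℝ, 0 < r →
      (∫⁻ t in Set.Ioc r s, G7 t) = ∫⁻ t in Set.Ioc 0 s, (Set.Ioi r).indicator G7 t := by
    intro r hr0
    rw [lintegral_indicator measurableSet_Ioi, Measure.restrict_restrict measurableSet_Ioi]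
    have hset : Set.Ioi r ∩ Set.Ioc 0 s = Set.Ioc r s := by
      ext t
      simp only [Set.mem_inter_iff, Set.mem_Ioi, Set.mem_Ioc]
      constructor
      · rintro ⟨h1, _, h3⟩; exact ⟨h1, h3⟩
      · rintro ⟨h1, h2⟩; exact ⟨h1, lt_trans hr0 h1, h2⟩
    rw [hset]
  -- step 1 : pull out 4/5 and use indicator form
  have step1 : (∫⁻ r in Set.Ioo (0:ℝ) c,
      ENNReal.ofReal ((4/5:ℝ) * r ^ (-(1/2):ℝ)) * ∫⁻ t in Set.Ioc r s, G7 t)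
      = ENNReal.ofReal (4/5) *
        ∫⁻ r in Set.Ioo (0:ℝ) c, ∫⁻ t in Set.Ioc 0 s, F r t := by
    rw [← lintegral_const_mul' _ _ ENNReal.ofReal_ne_top]
    apply setLIntegral_congr_fun measurableSet_Ioo
    intro r hr
    show _ = ENNReal.ofReal (4/5) *
      ∫⁻ t in Set.Ioc 0 s, ENNReal.ofReal (r ^ (-(1/2):ℝ)) * (Set.Ioi r).indicator G7 t
    rw [lintegral_const_mul _ (hG7m.indicator measurableSet_Ioi), ← mul_assoc,
      ← ENNReal.ofReal_mul (by norm_num), ← hinner r hr.1]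
  -- Tonelli swap
  have hswap : (∫⁻ r in Set.Ioo (0:ℝ) c, ∫⁻ t in Set.Ioc 0 s, F r t)
      = ∫⁻ t in Set.Ioc 0 s, ∫⁻ r in Set.Ioo (0:ℝ) c, F r t := by
    exact lintegral_lintegral_swap hFm.aemeasurable
  -- bound inner integral after swap
  have hbound : ∀ t : ℝ, t ∈ Set.Ioc 0 s →
      (∫⁻ r in Set.Ioo (0:ℝ) c, F r t) ≤ G7 t * ENNReal.ofReal (2 * t ^ (1/2:ℝ)) := by
    intro t ht
    have ht0 : 0 < t := ht.1
    have hFind : ∀ r : ℝ, F r t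
        = (Set.Iio t).indicator (fun r => ENNReal.ofReal (r ^ (-(1/2):ℝ)) * G7 t) r := by
      intro r
      show ENNReal.ofReal (r ^ (-(1/2):ℝ)) * (Set.Ioi r).indicator G7 t = _
      by_cases h : r < t
      · rw [Set.indicator_of_mem (Set.mem_Ioi.2 h)]
        rw [Set.indicator_of_mem (Set.mem_Iio.2 h)]
      · rw [Set.indicator_of_notMem (fun hh => h (Set.mem_Ioi.1 hh)), mul_zero]
        rw [Set.indicator_of_notMem (fun hh => h (Set.mem_Iio.1 hh))]
    calc (∫⁻ r in Set.Ioo (0:ℝ) c, F r t)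
        = ∫⁻ r in Set.Ioo (0:ℝ) c,
            (Set.Iio t).indicator (fun r => ENNReal.ofReal (r ^ (-(1/2):ℝ)) * G7 t) r := by
          exact lintegral_congr (fun r => hFind r)
      _ = ∫⁻ r in Set.Iio t ∩ Set.Ioo 0 c, ENNReal.ofReal (r ^ (-(1/2):ℝ)) * G7 t := by
          rw [lintegral_indicator measurableSet_Iio, Measure.restrict_restrict measurableSet_Iio]
      _ ≤ ∫⁻ r in Set.Ioo 0 t, ENNReal.ofReal (r ^ (-(1/2):ℝ)) * G7 t := by
          apply lintegral_mono'
          · apply Measure.restrict_mono _ le_rfl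
            rintro x ⟨h1, h2, _⟩; exact ⟨h2, h1⟩
          · exact le_rfl
      _ = (∫⁻ r in Set.Ioo 0 t, ENNReal.ofReal (r ^ (-(1/2):ℝ))) * G7 t := by
          rw [lintegral_mul_const _ (by fun_prop)]
      _ ≤ ENNReal.ofReal (2 * t ^ (1/2:ℝ)) * G7 t := by
          apply mul_le_mul_left
          have hint : IntegrableOn (fun r : ℝ => r ^ (-(1/2):ℝ)) (Set.Ioo 0 t) := by
            apply IntegrableOn.mono_set _ Set.Ioo_subset_Ioc_self
            exact (intervalIntegrable_iff_integrableOn_Ioc_of_le ht0.le).1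
              (intervalIntegral.intervalIntegrable_rpow' (by norm_num))
          rw [← ofReal_integral_eq_lintegral_ofReal hint (by
            filter_upwards [ae_restrict_mem measurableSet_Ioo] with x hx
            exact Real.rpow_nonneg hx.1.le _)]
          apply ENNReal.ofReal_le_ofReal
          rw [← integral_Ioc_eq_integral_Ioo, ← intervalIntegral.integral_of_le ht0.le,
            integral_rpow (Or.inl (by norm_num))]
          have he : (-(1/2):ℝ) + 1 = 1/2 := by norm_num
          rw [he, Real.zero_rpow (by norm_num), sub_zero]
          linarith
      _ = G7 t * ENNReal.ofReal (2 * t ^ (1/2:ℝ)) := mul_comm _ _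
  -- combine
  have hG4 : ∀ t : ℝ, t ∈ Set.Ioc 0 s →
      G7 t * ENNReal.ofReal (2 * t ^ (1/2:ℝ)) = ENNReal.ofReal (2 * (t ^ 4 * v t ^ 2)) := by
    intro t ht
    have ht0 : 0 < t := ht.1
    rw [hG7def]
    simp only []
    rw [← ENNReal.ofReal_mul (by positivity)]
    congr 1
    rw [show t ^ (7/2:ℝ) * v t ^ 2 * (2 * t ^ (1/2:ℝ)) = 2 * ((t ^ (7/2:ℝ) * t ^ (1/2:ℝ)) * v t ^ 2) by ring,
      ← Real.rpow_add ht0, show (7/2:ℝ) + 1/2 = ((4:ℕ):ℝ) by norm_num, Real.rpow_natCast]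
  have hlast : (∫⁻ t in Set.Ioc 0 s, ∫⁻ r in Set.Ioo (0:ℝ) c, F r t)
      ≤ (2:ℝ≥0∞) * ENNReal.ofReal A := by
    calc (∫⁻ t in Set.Ioc 0 s, ∫⁻ r in Set.Ioo (0:ℝ) c, F r t)
        ≤ ∫⁻ t in Set.Ioc 0 s, ENNReal.ofReal (2 * (t ^ 4 * v t ^ 2)) := by
          apply setLIntegral_mono (by fun_prop)
          intro t ht
          exact le_of_le_of_eq (hbound t ht) (hG4 t ht)
      _ = (2:ℝ≥0∞) * ∫⁻ t in Set.Ioc 0 s, ENNReal.ofReal (t ^ 4 * v t ^ 2) := by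
          rw [← lintegral_const_mul _ (by fun_prop)]
          congr 1
          ext t
          rw [ENNReal.ofReal_mul (by norm_num)]
          norm_num
      _ ≤ (2:ℝ≥0∞) * ∫⁻ t in Set.Ioo 0 (2*c), ENNReal.ofReal (t ^ 4 * v t ^ 2) := by
          apply mul_le_mul_right
          apply lintegral_mono'
          · apply Measure.restrict_mono _ le_rfl
            rintro x ⟨h1, h2⟩; exact ⟨h1, lt_of_le_of_lt h2 hs.2⟩
          · exact le_rfl
      _ = (2:ℝ≥0∞) * ENNReal.ofReal A := by
          rw [hAdef, ofReal_integral_eq_lintegral_ofReal hA (by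
            filter_upwards with t
            positivity)]
  calc (∫⁻ r in Set.Ioo (0:ℝ) c,
      ENNReal.ofReal ((4/5:ℝ) * r ^ (-(1/2):ℝ)) * ∫⁻ t in Set.Ioc r s, G7 t)
      = ENNReal.ofReal (4/5) * ∫⁻ r in Set.Ioo (0:ℝ) c, ∫⁻ t in Set.Ioc 0 s, F r t := step1
    _ = ENNReal.ofReal (4/5) * ∫⁻ t in Set.Ioc 0 s, ∫⁻ r in Set.Ioo (0:ℝ) c, F r t := by rw [hswap]
    _ ≤ ENNReal.ofReal (4/5) * ((2:ℝ≥0∞) * ENNReal.ofReal A) := mul_le_mul_right hlast _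
    _ = ENNReal.ofReal ((8/5) * A) := by
        rw [show (2:ℝ≥0∞) = ENNReal.ofReal 2 by simp, ← mul_assoc,
          ← ENNReal.ofReal_mul (by norm_num), ← ENNReal.ofReal_mul (by norm_num)]
        norm_num

lemma hardy_aux (R c : ℝ) (hc : 0 < c) (h2c : 2 * c < R)
    (u v : ℝ → ℝ) (hv : Measurable v)
    (hderiv : ∀ r ∈ Set.Ioo (0:ℝ) R, HasDerivAt u (v r) r)
    (hA : IntegrableOn (fun r => r ^ 4 * (v r) ^ 2) (Set.Ioo 0 (2*c)))
    (hB : IntegrableOn (fun r => r ^ 4 * (u r) ^ 2) (Set.Ioo c (2*c))) :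
    IntegrableOn (fun r => r ^ 2 * (u r) ^ 2) (Set.Ioo 0 c) ∧
    (∫ r in Set.Ioo (0:ℝ) c, r ^ 2 * (u r) ^ 2) ≤
      (2/c^2 + 8/5) * ((∫ r in Set.Ioo (0:ℝ) (2*c), r ^ 4 * (v r) ^ 2)
        + ∫ r in Set.Ioo c (2*c), r ^ 4 * (u r) ^ 2) := by
  have hcont : ContinuousOn u (Set.Ioo 0 R) :=
    fun x hx => (hderiv x hx).continuousAt.continuousWithinAt
  set A := ∫ r in Set.Ioo (0:ℝ) (2*c), r ^ 4 * (v r) ^ 2 with hAdef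
  set B := ∫ r in Set.Ioo c (2*c), r ^ 4 * (u r) ^ 2 with hBdef
  have hA0 : 0 ≤ A := setIntegral_nonneg measurableSet_Ioo (fun x _ => by positivity)
  have hB0 : 0 ≤ B := setIntegral_nonneg measurableSet_Ioo (fun x _ => by positivity)
  -- choose a good point s
  obtain ⟨s, hs, hus⟩ : ∃ s ∈ Set.Ioo c (2*c), c * (s ^ 4 * u s ^ 2) ≤ B := by
    by_contra hcon
    push_neg at hcon
    have hcc : c < 2 * c := by linarith
    have hBIoc : IntegrableOn (fun r => r ^ 4 * (u r) ^ 2) (Set.Ioc c (2*c)) := by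
      rwa [integrableOn_Ioc_iff_integrableOn_Ioo]
    have hint : IntervalIntegrable (fun t => t ^ 4 * u t ^ 2 - B / c) volume c (2*c) := by
      rw [intervalIntegrable_iff_integrableOn_Ioc_of_le hcc.le]
      exact hBIoc.sub (integrableOn_const measure_Ioc_lt_top.ne)
    have hpos := intervalIntegral.intervalIntegral_pos_of_pos_on hint (fun x hx => by
      have h := hcon x hx
      have hlt : B / c < x ^ 4 * u x ^ 2 := (div_lt_iff₀ hc).2 (by linarith [h])
      linarith) hcc
    have hzero : (∫ t in c..(2*c), (t ^ 4 * u t ^ 2 - B / c)) = 0 := by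
      rw [intervalIntegral.integral_of_le hcc.le,
        integral_sub hBIoc (integrableOn_const measure_Ioc_lt_top.ne),
        setIntegral_const, integral_Ioc_eq_integral_Ioo, ← hBdef, Real.volume_real_Ioc_of_le hcc.le]
      rw [show 2 * c - c = c by ring, smul_eq_mul]
      field_simp
      ring
    rw [hzero] at hpos
    exact lt_irrefl 0 hpos
  have hs0 : 0 < s := lt_trans hc hs.1
  have hsR : s < R := lt_trans hs.2 h2c
  have hus2 : u s ^ 2 ≤ B / c ^ 5 := by
    rw [le_div_iff₀ (by positivity)]
    have h4 : c ^ 4 ≤ s ^ 4 := pow_le_pow_left₀ hc.le hs.1.le 4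
    nlinarith [mul_le_mul_of_nonneg_left (mul_le_mul_of_nonneg_right h4 (sq_nonneg (u s))) hc.le]
  -- key pointwise estimate
  have key : ∀ r ∈ Set.Ioo (0:ℝ) c,
      ENNReal.ofReal (r ^ 2 * u r ^ 2) ≤
        ENNReal.ofReal (2 * c ^ 2 * u s ^ 2) + ENNReal.ofReal ((4/5:ℝ) * r ^ (-(1/2):ℝ)) * ∫⁻ t in Set.Ioc r s, ENNReal.ofReal (t ^ (7/2:ℝ) * v t ^ 2) :=
    hardy_key R c s hc h2c u v hv hderiv hA hs
  -- the Tonelli bound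
  have tonelli : (∫⁻ r in Set.Ioo (0:ℝ) c,
      ENNReal.ofReal ((4/5:ℝ) * r ^ (-(1/2):ℝ)) * ∫⁻ t in Set.Ioc r s, ENNReal.ofReal (t ^ (7/2:ℝ) * v t ^ 2))
      ≤ ENNReal.ofReal ((8/5) * A) :=
    hardy_tonelli R c s hc h2c v hv hA hs A hAdef
  -- main lintegral bound
  have main : (∫⁻ r in Set.Ioo (0:ℝ) c, ENNReal.ofReal (r ^ 2 * u r ^ 2)) ≤
      ENNReal.ofReal ((2/c^2) * B + (8/5) * A) := by
    have hmeas : Measurable (fun r : ℝ =>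
        ENNReal.ofReal (2 * c ^ 2 * u s ^ 2) + ENNReal.ofReal ((4/5:ℝ) * r ^ (-(1/2):ℝ)) * ∫⁻ t in Set.Ioc r s, ENNReal.ofReal (t ^ (7/2:ℝ) * v t ^ 2)) := by
      apply Measurable.const_add
      apply Measurable.mul
      · exact ENNReal.measurable_ofReal.comp (measurable_const.mul (Measurable.pow_const measurable_id _))
      · exact Antitone.measurable (fun a b hab => lintegral_mono' (Measure.restrict_mono (Set.Ioc_subset_Ioc_left hab) le_rfl) le_rfl)
    calc (∫⁻ r in Set.Ioo (0:ℝ) c, ENNReal.ofReal (r ^ 2 * u r ^ 2))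
        ≤ ∫⁻ r in Set.Ioo (0:ℝ) c,
            (ENNReal.ofReal (2 * c ^ 2 * u s ^ 2) + ENNReal.ofReal ((4/5:ℝ) * r ^ (-(1/2):ℝ)) * ∫⁻ t in Set.Ioc r s, ENNReal.ofReal (t ^ (7/2:ℝ) * v t ^ 2)) :=
          setLIntegral_mono hmeas key
      _ = ENNReal.ofReal (2 * c ^ 2 * u s ^ 2) * volume (Set.Ioo (0:ℝ) c) + ∫⁻ r in Set.Ioo (0:ℝ) c,
            ENNReal.ofReal ((4/5:ℝ) * r ^ (-(1/2):ℝ)) * ∫⁻ t in Set.Ioc r s, ENNReal.ofReal (t ^ (7/2:ℝ) * v t ^ 2) := by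
          rw [lintegral_add_left measurable_const, setLIntegral_const]
      _ ≤ ENNReal.ofReal ((2/c^2) * B) + ENNReal.ofReal ((8/5) * A) := by
          apply add_le_add _ tonelli
          rw [Real.volume_Ioo, sub_zero, ← ENNReal.ofReal_mul (by positivity)]
          apply ENNReal.ofReal_le_ofReal
          calc 2 * c ^ 2 * u s ^ 2 * c ≤ 2 * c ^ 2 * (B / c ^ 5) * c := by gcongr
            _ = (2/c^2) * B := by field_simp
      _ = ENNReal.ofReal ((2/c^2) * B + (8/5) * A) := by
          rw [ENNReal.ofReal_add (by positivity) (by positivity)]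
  -- conclude
  have hnn : ∀ r ∈ Set.Ioo (0:ℝ) c, 0 ≤ r ^ 2 * u r ^ 2 := fun r _ => by positivity
  have hnn' : 0 ≤ᵐ[volume.restrict (Set.Ioo (0:ℝ) c)] fun r => r ^ 2 * u r ^ 2 := by
    filter_upwards [ae_restrict_mem measurableSet_Ioo] with r hr using hnn r hr
  have hsub : Set.Ioo (0:ℝ) c ⊆ Set.Ioo 0 R := Set.Ioo_subset_Ioo le_rfl (by linarith)
  have haesm : AEStronglyMeasurable (fun r => r ^ 2 * u r ^ 2) (volume.restrict (Set.Ioo (0:ℝ) c)) := by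
    apply ContinuousOn.aestronglyMeasurable _ measurableSet_Ioo
    exact (continuousOn_id.pow 2).mul ((hcont.mono hsub).pow 2)
  have hint : IntegrableOn (fun r => r ^ 2 * u r ^ 2) (Set.Ioo 0 c) := by
    refine ⟨haesm, ?_⟩
    rw [hasFiniteIntegral_iff_ofReal hnn']
    exact lt_of_le_of_lt main ENNReal.ofReal_lt_top
  refine ⟨hint, ?_⟩
  rw [integral_eq_lintegral_of_nonneg_ae hnn' haesm]
  have := ENNReal.toReal_le_of_le_ofReal (by positivity) main
  calc (∫⁻ r in Set.Ioo (0:ℝ) c, ENNReal.ofReal (r ^ 2 * u r ^ 2)).toReal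
      ≤ (2/c^2) * B + (8/5) * A := this
    _ ≤ (2/c^2 + 8/5) * (A + B) := by
        have h1 : (0:ℝ) ≤ (2/c^2) * A := by positivity
        have h2 : (0:ℝ) ≤ (8/5) * B := by positivity
        nlinarith [h1, h2]

/-- Localized Hardy inequality near the origin:
`∫₀^c r² u² dr ≤ C (∫₀^{2c} r⁴ u'² dr + ∫_c^{2c} r⁴ u² dr)`. -/
theorem localized_hardy_inequality_origin
    (R c : ℝ) (hR : 0 < R) (hc : 0 < c) (h2c : 2 * c < R) :
    ∃ C > (0:ℝ), ∀ u u' : ℝ → ℝ,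
      (∀ r ∈ Set.Ioo (0:ℝ) R, HasDerivAt u (u' r) r) →
      MeasureTheory.IntegrableOn (fun r => r ^ 4 * (u' r) ^ 2) (Set.Ioo 0 (2 * c)) →
      MeasureTheory.IntegrableOn (fun r => r ^ 4 * (u r) ^ 2) (Set.Ioo c (2 * c)) →
      MeasureTheory.IntegrableOn (fun r => r ^ 2 * (u r) ^ 2) (Set.Ioo 0 c) ∧
      (∫ r in Set.Ioo (0:ℝ) c, r ^ 2 * (u r) ^ 2) ≤
        C * ((∫ r in Set.Ioo (0:ℝ) (2 * c), r ^ 4 * (u' r) ^ 2)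
          + ∫ r in Set.Ioo c (2 * c), r ^ 4 * (u r) ^ 2) := by
  refine ⟨2/c^2 + 8/5, by positivity, ?_⟩
  intro u u' hderiv hA hB
  set v := deriv u with hvdef
  have hvd : ∀ r ∈ Set.Ioo (0:ℝ) R, HasDerivAt u (v r) r := fun r hr => by
    rw [hvdef, (hderiv r hr).deriv]; exact hderiv r hr
  have heq : Set.EqOn (fun r => r ^ 4 * (u' r) ^ 2) (fun r => r ^ 4 * (v r) ^ 2)
      (Set.Ioo 0 (2 * c)) := by
    intro r hr
    have hrR : r ∈ Set.Ioo (0:ℝ) R := ⟨hr.1, lt_trans hr.2 h2c⟩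
    simp only [hvdef, (hderiv r hrR).deriv]
  have hA' : IntegrableOn (fun r => r ^ 4 * (v r) ^ 2) (Set.Ioo 0 (2 * c)) :=
    hA.congr_fun heq measurableSet_Ioo
  have hIeq : (∫ r in Set.Ioo (0:ℝ) (2 * c), r ^ 4 * (u' r) ^ 2)
      = ∫ r in Set.Ioo (0:ℝ) (2 * c), r ^ 4 * (v r) ^ 2 :=
    setIntegral_congr_fun measurableSet_Ioo heq
  have hv : Measurable v := measurable_deriv u
  obtain ⟨h1, h2⟩ := hardy_aux R c hc h2c u v hv hvd hA' hB
  exact ⟨h1, by rw [hIeq]; exact h2⟩
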